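/- Let n ≥ 2 and let S_{n,2} = F_n/(F_n)'' be the free metabelian group of rank n, the quotient of the free group F_n of rank n by its second derived subgroup (S_{n,2} is finitely generated by the images of the free generators). For every integer m ≥ 1, there is a 2-generated subgroup H of S_{n,2} whose distortion function satisfies Δ_H^{S_{n,2}}(l) ⪰ l^m. -/

import Mathlib

open scoped Pointwise
open scoped commutatorElement

namespace DistortionPaper

section Defs

variable (A B : Type*) [Group A] [Group B]

/-- The base group of the restricted wreath product: finitely supported functions `B → A`
under pointwise multiplication, as a subgroup of `B → A`. -/
def WreathBase : Subgroup (B → A) where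
  carrier := {f | (Function.mulSupport f).Finite}
  one_mem' := by
    simp [Function.mulSupport_one]
  mul_mem' := by
    intro f g hf hg
    exact ((Set.Finite.union hf hg).subset (Function.mulSupport_mul f g))
  inv_mem' := by
    intro f hf
    simpa [Function.mulSupport_inv] using hf

/-- The shift automorphism of the base group: `(g ∘ f)(x) = f(x * g)`. -/
def wreathShift (g : B) : WreathBase A B ≃* WreathBase A B where
  toFun f := ⟨fun x => (f : B → A) (x * g), by
    have h : Function.mulSupport (fun x => (f : B → A) (x * g))
        ⊆ (fun x : B => x * g) ⁻¹' Function.mulSupport (f : B → A) := fun x hx => hx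
    exact (Set.Finite.preimage (Set.injOn_of_injective (mul_left_injective g)) f.2).subset h⟩
  invFun f := ⟨fun x => (f : B → A) (x * g⁻¹), by
    have h : Function.mulSupport (fun x => (f : B → A) (x * g⁻¹))
        ⊆ (fun x : B => x * g⁻¹) ⁻¹' Function.mulSupport (f : B → A) := fun x hx => hx
    exact (Set.Finite.preimage (Set.injOn_of_injective (mul_left_injective g⁻¹)) f.2).subset h⟩
  left_inv f := Subtype.ext <| funext fun x => by simp [mul_assoc]
  right_inv f := Subtype.ext <| funext fun x => by simp [mul_assoc]
  map_mul' f₁ f₂ := Subtype.ext <| funext fun _ => rfl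

/-- The action of `B` on the base group by shifts. -/
def wreathAction : B →* MulAut (WreathBase A B) where
  toFun g := wreathShift A B g
  map_one' := by
    refine MulEquiv.ext fun f => Subtype.ext <| funext fun x => ?_
    show (f : B → A) (x * 1) = (f : B → A) x
    rw [mul_one]
  map_mul' g₁ g₂ := by
    refine MulEquiv.ext fun f => Subtype.ext <| funext fun x => ?_
    show (f : B → A) (x * (g₁ * g₂)) = (f : B → A) (x * g₁ * g₂)
    rw [mul_assoc]

/-- The restricted wreath product `A wr B`. -/
abbrev WreathProduct := WreathBase A B ⋊[wreathAction A B] B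

/-- The element of the base group supported at `1 ∈ B` with value `a`. -/
noncomputable def toBase (a : A) : WreathBase A B := by
  classical
  exact ⟨fun x => if x = (1 : B) then a else 1, by
    apply Set.Finite.subset (Set.finite_singleton (1 : B))
    intro x hx
    simp only [Function.mem_mulSupport] at hx
    simp only [Set.mem_singleton_iff]
    by_contra hne
    rw [if_neg hne] at hx
    exact hx rfl⟩

/-- The canonical copy of `A` in `A wr B` (functions supported at `1`). -/
noncomputable def ofPassive (a : A) : WreathProduct A B :=
  SemidirectProduct.inl (toBase A B a)

/-- The canonical copy of `B` in `A wr B`. -/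
def ofActive (g : B) : WreathProduct A B := SemidirectProduct.inr g

/-- The generating set `S ∪ T` of `A wr B` obtained from generating sets `S` of `A`
and `T` of `B`. -/
def wreathGen (S : Set A) (T : Set B) : Set (WreathProduct A B) :=
  (fun a => ofPassive A B a) '' S ∪ (fun g => ofActive A B g) '' T

end Defs

/-- Word length of `g` with respect to the set `T`: the least `n` such that `g` is a
product of `n` elements of `T ∪ T⁻¹` (and `0` if no such `n` exists). -/
noncomputable def wordLength {G : Type*} [Group G] (T : Set G) (g : G) : ℕ :=
  sInf {n | ∃ f : Fin n → G, (∀ i, f i ∈ T ∪ T⁻¹) ∧ (List.ofFn f).prod = g}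

/-- The distortion function of a subgroup `H` of `G`, where `T` is a generating set of `G`
and `S` a generating set of `H`. -/
noncomputable def distortion {G : Type*} [Group G] (T : Set G) (H : Subgroup G)
    (S : Set H) (l : ℕ) : ℕ :=
  sSup (wordLength S '' {h : H | wordLength T (h : G) ≤ l})

/-- `f ⪯ g` : there is `C > 0` with `f l ≤ C * g (C * l)` for all `l`. -/
def Dominates (f g : ℕ → ℕ) : Prop := ∃ C : ℕ, 0 < C ∧ ∀ l, f l ≤ C * g (C * l)

/-- `f ≈ g` : `f ⪯ g` and `g ⪯ f`. -/
def DistEquiv (f g : ℕ → ℕ) : Prop := Dominates f g ∧ Dominates g f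

/-- A subgroup is subnormal if there is a finite chain from it to the whole group,
each term normal in the next. -/
def IsSubnormal {G : Type*} [Group G] (H : Subgroup G) : Prop :=
  ∃ (n : ℕ) (c : ℕ → Subgroup G), c 0 = H ∧ c n = ⊤ ∧
    ∀ i < n, c i ≤ c (i + 1) ∧ ∀ x ∈ c (i + 1), ∀ h ∈ c i, x * h * x⁻¹ ∈ c i

/-- `ℤ` as a multiplicative group. -/
abbrev Mℤ := Multiplicative ℤ

/-- The wreath product `ℤ wr ℤ`. -/
abbrev ZwrZ := WreathProduct Mℤ Mℤ

/-- The standard generator `a` of `ℤ wr ℤ` (passive copy, supported at `1`). -/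
noncomputable def aZ : ZwrZ := ofPassive Mℤ Mℤ (Multiplicative.ofAdd 1)

/-- The standard generator `b` of `ℤ wr ℤ` (active copy). -/
def bZ : ZwrZ := ofActive Mℤ Mℤ (Multiplicative.ofAdd 1)


instance (n : ℕ) : (derivedSeries (FreeGroup (Fin n)) 2).Normal :=
  derivedSeries_normal _ 2

/-- The free metabelian group of rank `n`: the free group modulo its second derived
subgroup. -/
abbrev FreeMetabelian (n : ℕ) :=
  FreeGroup (Fin n) ⧸ derivedSeries (FreeGroup (Fin n)) 2


namespace WL

variable {G : Type*} [Group G] {T : Set G}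

/-- The representation set underlying `wordLength`. -/
def repSet (T : Set G) (g : G) : Set ℕ :=
  {n | ∃ f : Fin n → G, (∀ i, f i ∈ T ∪ T⁻¹) ∧ (List.ofFn f).prod = g}

lemma wordLength_eq (g : G) : wordLength T g = sInf (repSet T g) := rfl

lemma mem_repSet_iff {g : G} {n : ℕ} :
    n ∈ repSet T g ↔ ∃ L : List G, L.length = n ∧ (∀ x ∈ L, x ∈ T ∪ T⁻¹) ∧ L.prod = g := by
  constructor
  · rintro ⟨f, hf, hprod⟩
    exact ⟨List.ofFn f, List.length_ofFn, by
      intro x hx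
      obtain ⟨i, rfl⟩ := List.mem_ofFn.mp hx
      exact hf i, hprod⟩
  · rintro ⟨L, rfl, hL, rfl⟩
    exact ⟨L.get, fun i => hL _ (List.get_mem L i), by rw [List.ofFn_get]⟩

lemma repSet_nonempty (hT : Subgroup.closure T = ⊤) (g : G) : (repSet T g).Nonempty := by
  have : g ∈ Subgroup.closure T := hT ▸ Subgroup.mem_top g
  refine Subgroup.closure_induction ?_ ?_ ?_ ?_ this
  · intro x hx
    exact ⟨1, mem_repSet_iff.mpr ⟨[x], rfl, by simpa using Or.inl hx, by simp⟩⟩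
  · exact ⟨0, mem_repSet_iff.mpr ⟨[], rfl, by simp, by simp⟩⟩
  · rintro x y - - ⟨nx, hx⟩ ⟨ny, hy⟩
    obtain ⟨Lx, hLx, hmx, rfl⟩ := mem_repSet_iff.mp hx
    obtain ⟨Ly, hLy, hmy, rfl⟩ := mem_repSet_iff.mp hy
    refine ⟨nx + ny, mem_repSet_iff.mpr ⟨Lx ++ Ly, by simp [hLx, hLy], ?_, by simp⟩⟩
    intro x hx
    rcases List.mem_append.mp hx with h | h
    · exact hmx _ h
    · exact hmy _ h
  · rintro x - ⟨nx, hx⟩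
    obtain ⟨Lx, hLx, hmx, rfl⟩ := mem_repSet_iff.mp hx
    refine ⟨nx, mem_repSet_iff.mpr ⟨(Lx.map Inv.inv).reverse, by simp [hLx], ?_, by
      rw [List.prod_reverse_noncomm]; simp⟩⟩
    intro x hx
    simp only [List.mem_reverse, List.mem_map] at hx
    obtain ⟨y, hy, rfl⟩ := hx
    rcases hmx y hy with h | h
    · exact Or.inr (by simpa using h)
    · exact Or.inl (by simpa using h)

lemma exists_list_wordLength (hT : Subgroup.closure T = ⊤) (g : G) :
    ∃ L : List G, L.length = wordLength T g ∧ (∀ x ∈ L, x ∈ T ∪ T⁻¹) ∧ L.prod = g :=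
  mem_repSet_iff.mp (Nat.sInf_mem (repSet_nonempty hT g))

lemma wordLength_le_of_list (L : List G) (hL : ∀ x ∈ L, x ∈ T ∪ T⁻¹) :
    wordLength T L.prod ≤ L.length :=
  Nat.sInf_le (mem_repSet_iff.mpr ⟨L, rfl, hL, rfl⟩)

lemma wordLength_one : wordLength T (1 : G) = 0 :=
  Nat.le_zero.mp (by simpa using wordLength_le_of_list (T := T) [] (by simp))

lemma wordLength_mul_le (hT : Subgroup.closure T = ⊤) (g h : G) :
    wordLength T (g * h) ≤ wordLength T g + wordLength T h := by
  obtain ⟨Lg, hLg, hmg, rfl⟩ := exists_list_wordLength hT g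
  obtain ⟨Lh, hLh, hmh, rfl⟩ := exists_list_wordLength hT h
  have := wordLength_le_of_list (T := T) (Lg ++ Lh) (by
    intro x hx
    rcases List.mem_append.mp hx with h | h
    · exact hmg _ h
    · exact hmh _ h)
  simpa [hLg, hLh] using this

lemma wordLength_inv_le (hT : Subgroup.closure T = ⊤) (g : G) :
    wordLength T g⁻¹ ≤ wordLength T g := by
  obtain ⟨Lg, hLg, hmg, rfl⟩ := exists_list_wordLength hT g
  have := wordLength_le_of_list (T := T) ((Lg.map Inv.inv).reverse) (by
    intro x hx
    simp only [List.mem_reverse, List.mem_map] at hx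
    obtain ⟨y, hy, rfl⟩ := hx
    rcases hmg y hy with h | h
    · exact Or.inr (by simpa using h)
    · exact Or.inl (by simpa using h))
  rw [List.prod_reverse_noncomm] at this
  simpa [hLg] using this

lemma wordLength_pow_le (hT : Subgroup.closure T = ⊤) (g : G) (k : ℕ) :
    wordLength T (g ^ k) ≤ k * wordLength T g := by
  induction k with
  | zero => simp [wordLength_one]
  | succ k ih =>
    calc wordLength T (g ^ (k + 1)) = wordLength T (g ^ k * g) := by rw [pow_succ]
    _ ≤ wordLength T (g ^ k) + wordLength T g := wordLength_mul_le hT _ _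
    _ ≤ k * wordLength T g + wordLength T g := by omega
    _ = (k + 1) * wordLength T g := by ring

lemma wordLength_ball_finite (hT : Subgroup.closure T = ⊤) (hTf : T.Finite) (L : ℕ) :
    {g : G | wordLength T g ≤ L}.Finite := by
  have hfin : (T ∪ T⁻¹).Finite := hTf.union hTf.inv
  have : {g : G | wordLength T g ≤ L} ⊆
      ⋃ n ∈ Finset.range (L + 1),
        (fun f : Fin n → (T ∪ T⁻¹ : Set G) => (List.ofFn fun i => ((f i : G))).prod) ''
          Set.univ := by
    intro g hg
    obtain ⟨f, hf, hprod⟩ := Nat.sInf_mem (repSet_nonempty hT g)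
    simp only [Set.mem_iUnion, Finset.mem_range]
    have hg' : wordLength T g ≤ L := hg
    refine ⟨wordLength T g, by omega, (fun i => ⟨f i, hf i⟩), Set.mem_univ _, hprod⟩
  refine Set.Finite.subset ?_ this
  refine Set.Finite.biUnion (Finset.range (L+1)).finite_toSet ?_
  intro n _
  have : Finite (T ∪ T⁻¹ : Set G) := hfin
  exact Set.toFinite _

end WL

namespace WL

variable {G : Type*} [Group G] {T : Set G}

lemma natAbs_le_of_list (ψ : G →* Multiplicative ℤ) {E : ℕ}
    (hE : ∀ t ∈ T, (Multiplicative.toAdd (ψ t)).natAbs ≤ E) (L : List G)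
    (hL : ∀ x ∈ L, x ∈ T ∪ T⁻¹) :
    (Multiplicative.toAdd (ψ L.prod)).natAbs ≤ L.length * E := by
  induction L with
  | nil => simp
  | cons a L ih =>
    have ha : (Multiplicative.toAdd (ψ a)).natAbs ≤ E := by
      rcases hL a List.mem_cons_self with h | h
      · exact hE a h
      · have := hE a⁻¹ (Set.mem_inv.mp h)
        rw [map_inv] at this
        simpa using this
    have hrest := ih (fun x hx => hL x (List.mem_cons_of_mem _ hx))
    have : ψ (a :: L).prod = ψ a * ψ L.prod := by rw [List.prod_cons, map_mul]
    rw [this]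
    calc (Multiplicative.toAdd (ψ a * ψ L.prod)).natAbs
        = (Multiplicative.toAdd (ψ a) + Multiplicative.toAdd (ψ L.prod)).natAbs := rfl
      _ ≤ (Multiplicative.toAdd (ψ a)).natAbs + (Multiplicative.toAdd (ψ L.prod)).natAbs :=
          Int.natAbs_add_le _ _
      _ ≤ E + L.length * E := by omega
      _ = (a :: L).length * E := by simp [List.length_cons]; ring

lemma natAbs_le_wordLength (hT : Subgroup.closure T = ⊤) (ψ : G →* Multiplicative ℤ) {E : ℕ}
    (hE : ∀ t ∈ T, (Multiplicative.toAdd (ψ t)).natAbs ≤ E) (g : G) :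
    (Multiplicative.toAdd (ψ g)).natAbs ≤ wordLength T g * E := by
  obtain ⟨L, hlen, hmem, rfl⟩ := exists_list_wordLength hT g
  simpa [hlen] using natAbs_le_of_list ψ hE L hmem

lemma bddAbove_distortion_set {H : Subgroup G} (S : Set H)
    (hT : Subgroup.closure T = ⊤) (hTf : T.Finite) (L : ℕ) :
    BddAbove (wordLength S '' {h : H | wordLength T (h : G) ≤ L}) := by
  have h1 : {h : H | wordLength T (h : G) ≤ L}.Finite := by
    have := wordLength_ball_finite hT hTf L
    exact Set.Finite.preimage (Set.injOn_of_injective Subtype.val_injective) this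
  exact (h1.image _).bddAbove

lemma le_distortion {H : Subgroup G} {S : Set H}
    (hT : Subgroup.closure T = ⊤) (hTf : T.Finite) {L : ℕ} (h : H)
    (hh : wordLength T (h : G) ≤ L) :
    wordLength S h ≤ distortion T H S L :=
  le_csSup (bddAbove_distortion_set S hT hTf L) ⟨h, hh, rfl⟩

lemma distortion_mono {H : Subgroup G} {S : Set H}
    (hT : Subgroup.closure T = ⊤) (hTf : T.Finite) {L L' : ℕ} (hLL : L ≤ L') :
    distortion T H S L ≤ distortion T H S L' := by
  apply csSup_le_csSup (bddAbove_distortion_set S hT hTf L')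
  · exact ⟨wordLength S 1, 1, by simp [wordLength_one], rfl⟩
  · exact Set.image_mono (fun h hh => le_trans hh hLL)

end WL

namespace MB

variable {G : Type*} [Group G]

/-- The `⟨b⟩`-span of the conjugates of `z` by powers of `b`. -/
def Mspan (b z : G) : Subgroup G :=
  Subgroup.closure {x | ∃ i : ℤ, x = (b ^ i)⁻¹ * z * b ^ i}

lemma conj_mem_Mspan (b z : G) (i : ℤ) : (b ^ i)⁻¹ * z * b ^ i ∈ Mspan b z :=
  Subgroup.subset_closure ⟨i, rfl⟩

lemma self_mem_Mspan (b z : G) : z ∈ Mspan b z := by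
  simpa using conj_mem_Mspan b z 0

lemma Mspan_conj (b z : G) (j : ℤ) {x : G} (hx : x ∈ Mspan b z) :
    (b ^ j)⁻¹ * x * b ^ j ∈ Mspan b z := by
  refine Subgroup.closure_induction ?_ ?_ ?_ ?_ hx
  · rintro y ⟨i, rfl⟩
    have : (b ^ j)⁻¹ * ((b ^ i)⁻¹ * z * b ^ i) * b ^ j
        = (b ^ (i + j))⁻¹ * z * b ^ (i + j) := by
      rw [zpow_add]; group
    rw [this]
    exact conj_mem_Mspan b z (i + j)
  · simpa using Subgroup.one_mem _
  · intro x y _ _ hx hy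
    have : (b ^ j)⁻¹ * (x * y) * b ^ j
        = ((b ^ j)⁻¹ * x * b ^ j) * ((b ^ j)⁻¹ * y * b ^ j) := by group
    rw [this]; exact Subgroup.mul_mem _ hx hy
  · intro x _ hx
    have : (b ^ j)⁻¹ * x⁻¹ * b ^ j = ((b ^ j)⁻¹ * x * b ^ j)⁻¹ := by group
    rw [this]; exact Subgroup.inv_mem _ hx

lemma Mspan_le_normal (b z : G) (D : Subgroup G) (hD : D.Normal) (hz : z ∈ D) :
    Mspan b z ≤ D := by
  unfold Mspan
  rw [Subgroup.closure_le]
  rintro x ⟨i, rfl⟩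
  simpa [mul_assoc] using hD.conj_mem z hz (b ^ i)⁻¹

lemma comm_pow_succ (z w : G) (l : ℕ) :
    ⁅z, w ^ (l + 1)⁆ = ⁅z, w⁆ * (w * ⁅z, w ^ l⁆ * w⁻¹) := by
  simp only [commutatorElement_def, pow_succ]
  group

lemma comm_pow_mem (z b : G) (l : ℕ) : ⁅z, b ^ l⁆ ∈ Mspan b ⁅z, b⁆ := by
  induction l with
  | zero =>
    rw [pow_zero, commutatorElement_one_right]
    exact Subgroup.one_mem _
  | succ l ih =>
    rw [comm_pow_succ]
    refine Subgroup.mul_mem _ (self_mem_Mspan b ⁅z, b⁆) ?_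
    have := Mspan_conj b ⁅z, b⁆ (-1 : ℤ) ih
    simpa [zpow_neg, zpow_one] using this

lemma comm_mem_der (x y : G) : ⁅x, y⁆ ∈ derivedSeries G 1 := by
  rw [derivedSeries_one]
  exact Subgroup.commutator_mem_commutator (Subgroup.mem_top x) (Subgroup.mem_top y)

section Metabelian

variable (Hcomm : ∀ x y : G, x ∈ derivedSeries G 1 → y ∈ derivedSeries G 1 → x * y = y * x)

include Hcomm

lemma step_lemma (b w : G) (hw : w ∈ derivedSeries G 1) (l : ℕ) {z : G}
    (hz : z ∈ Mspan b w) : ⁅z, b ^ l⁆ ∈ Mspan b ⁅w, b⁆ := by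
  have hD : Mspan b w ≤ derivedSeries G 1 :=
    Mspan_le_normal b w _ (derivedSeries_normal G 1) hw
  have hD' : Mspan b ⁅w, b⁆ ≤ derivedSeries G 1 :=
    Mspan_le_normal b ⁅w, b⁆ _ (derivedSeries_normal G 1) (comm_mem_der w b)
  refine Subgroup.closure_induction ?_ ?_ ?_ ?_ hz
  · rintro y ⟨i, rfl⟩
    have key : ⁅(b ^ i)⁻¹ * w * b ^ i, b ^ l⁆
        = (b ^ i)⁻¹ * ⁅w, b ^ l⁆ * b ^ i := by
      have hb : (b ^ i)⁻¹ * (b ^ l) * b ^ i = b ^ l := by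
        have h1 : (b ^ i) * (b ^ l : G) = (b ^ l) * b ^ i := by
          rw [← zpow_natCast b l, ← zpow_add, ← zpow_add, add_comm]
        rw [mul_assoc, ← h1, inv_mul_cancel_left]
      calc ⁅(b ^ i)⁻¹ * w * b ^ i, b ^ l⁆
          = ⁅(b ^ i)⁻¹ * w * b ^ i, (b ^ i)⁻¹ * (b ^ l) * b ^ i⁆ := by rw [hb]
        _ = (b ^ i)⁻¹ * ⁅w, b ^ l⁆ * b ^ i := by
            simp only [commutatorElement_def]; group
    rw [key]
    exact Mspan_conj b _ i (comm_pow_mem w b l)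
  · simp only [commutatorElement_def]
    simpa using Subgroup.one_mem _
  · intro x y hxm hym hx hy
    have key : ⁅x * y, b ^ l⁆ = x * ⁅y, b ^ l⁆ * x⁻¹ * ⁅x, b ^ l⁆ := by
      simp only [commutatorElement_def]; group
    have hcomm : x * ⁅y, b ^ l⁆ * x⁻¹ = ⁅y, b ^ l⁆ := by
      have := Hcomm x ⁅y, b ^ l⁆ (hD hxm) (hD' hy)
      rw [this]; group
    rw [key, hcomm]
    exact Subgroup.mul_mem _ hy hx
  · intro x hxm hx
    have key : ⁅x⁻¹, b ^ l⁆ = x⁻¹ * ⁅x, b ^ l⁆⁻¹ * x := by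
      simp only [commutatorElement_def]; group
    have hcomm : x⁻¹ * ⁅x, b ^ l⁆⁻¹ * x = ⁅x, b ^ l⁆⁻¹ := by
      have := Hcomm x ⁅x, b ^ l⁆⁻¹ (hD hxm) (Subgroup.inv_mem _ (hD' hx))
      rw [mul_assoc, ← this]; group
    rw [key, hcomm]
    exact Subgroup.inv_mem _ hx

end Metabelian

/-- `wseq a b l k` is the `k`-fold iterated commutator of `a` with `b^l`. -/
def wseq (a b : G) (l : ℕ) : ℕ → G
  | 0 => a
  | k + 1 => ⁅wseq a b l k, b ^ l⁆

lemma wseq_mem_der (a b : G) (l : ℕ) (k : ℕ) (hk : 1 ≤ k) :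
    wseq a b l k ∈ derivedSeries G 1 := by
  obtain ⟨k, rfl⟩ := Nat.exists_eq_add_of_le hk
  rw [show 1 + k = k + 1 by ring]
  exact comm_mem_der _ _

lemma wseq_mem_Mspan
    (Hcomm : ∀ x y : G, x ∈ derivedSeries G 1 → y ∈ derivedSeries G 1 → x * y = y * x)
    (a b : G) (l : ℕ) (k : ℕ) (hk : 1 ≤ k) :
    wseq a b l k ∈ Mspan b (wseq a b 1 k) := by
  induction k with
  | zero => omega
  | succ k ih =>
    rcases Nat.eq_or_lt_of_le hk with h | h
    · -- k + 1 = 1, i.e. k = 0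
      have hk0 : k = 0 := by omega
      subst hk0
      show ⁅a, b ^ l⁆ ∈ Mspan b ⁅a, b ^ 1⁆
      rw [pow_one]
      exact comm_pow_mem a b l
    · have hk1 : 1 ≤ k := by omega
      have ihk := ih hk1
      have hw : wseq a b 1 k ∈ derivedSeries G 1 := wseq_mem_der a b 1 k hk1
      have := step_lemma Hcomm b (wseq a b 1 k) hw l ihk
      show ⁅wseq a b l k, b ^ l⁆ ∈ Mspan b (wseq a b 1 (k + 1))
      have hT : wseq a b 1 (k + 1) = ⁅wseq a b 1 k, b⁆ := by
        show ⁅wseq a b 1 k, b ^ 1⁆ = _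
        rw [pow_one]
      rw [hT]
      exact this

lemma Mspan_le_closure (b z : G) : Mspan b z ≤ Subgroup.closure {z, b} := by
  unfold Mspan
  rw [Subgroup.closure_le]
  rintro x ⟨i, rfl⟩
  have hz : z ∈ Subgroup.closure {z, b} :=
    Subgroup.subset_closure (Set.mem_insert _ _)
  have hb : b ∈ Subgroup.closure {z, b} :=
    Subgroup.subset_closure (Set.mem_insert_of_mem _ rfl)
  exact Subgroup.mul_mem _ (Subgroup.mul_mem _ (Subgroup.inv_mem _ (Subgroup.zpow_mem _ hb i)) hz)
    (Subgroup.zpow_mem _ hb i)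

end MB

namespace ZW

/-- Shift by `i` as a monoid hom on the base of `ℤ wr ℤ`. -/
def shift (i : ℤ) : WreathBase Mℤ Mℤ →* WreathBase Mℤ Mℤ :=
  (wreathAction Mℤ Mℤ (Multiplicative.ofAdd i)).toMonoidHom

lemma shift_apply (i : ℤ) (f : WreathBase Mℤ Mℤ) (x : Mℤ) :
    ((shift i f : WreathBase Mℤ Mℤ) : Mℤ → Mℤ) x
      = (f : Mℤ → Mℤ) (x * Multiplicative.ofAdd i) := rfl

lemma shift_shift (i j : ℤ) (f : WreathBase Mℤ Mℤ) :
    shift i (shift j f) = shift (i + j) f := by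
  refine Subtype.ext (funext fun x => ?_)
  simp only [shift_apply]
  rw [mul_assoc, ← ofAdd_add]

lemma shift_zero (f : WreathBase Mℤ Mℤ) : shift 0 f = f := by
  refine Subtype.ext (funext fun x => ?_)
  rw [shift_apply, ofAdd_zero, mul_one]

lemma act_eq_shift (g : Mℤ) (f : WreathBase Mℤ Mℤ) :
    wreathAction Mℤ Mℤ g f = shift (Multiplicative.toAdd g) f := rfl

/-- The "sum of the values" homomorphism. -/
noncomputable def sigma : WreathBase Mℤ Mℤ →* Multiplicative ℤ where
  toFun f := Multiplicative.ofAdd (∑ᶠ x : Mℤ, Multiplicative.toAdd ((f : Mℤ → Mℤ) x))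
  map_one' := by
    simp only [Subgroup.coe_one, Pi.one_apply, toAdd_one, finsum_zero, ofAdd_zero]
  map_mul' f g := by
    have hf : (Function.support fun x => Multiplicative.toAdd ((f : Mℤ → Mℤ) x)).Finite := by
      exact f.2
    have hg : (Function.support fun x => Multiplicative.toAdd ((g : Mℤ → Mℤ) x)).Finite := by
      exact g.2
    simp only [Subgroup.coe_mul, Pi.mul_apply, toAdd_mul]
    rw [← ofAdd_add, finsum_add_distrib hf hg]

lemma support_toAdd (f : WreathBase Mℤ Mℤ) :
    (Function.support fun x => Multiplicative.toAdd ((f : Mℤ → Mℤ) x))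
      = Function.mulSupport (f : Mℤ → Mℤ) := rfl

lemma sigma_shift (i : ℤ) (f : WreathBase Mℤ Mℤ) : sigma (shift i f) = sigma f := by
  have key : (∑ᶠ x : Mℤ, Multiplicative.toAdd ((f : Mℤ → Mℤ) (x * Multiplicative.ofAdd i)))
      = ∑ᶠ x : Mℤ, Multiplicative.toAdd ((f : Mℤ → Mℤ) x) :=
    finsum_eq_of_bijective (fun x : Mℤ => x * Multiplicative.ofAdd i)
      (Group.mulRight_bijective _) (fun x => rfl)
  show Multiplicative.ofAdd (∑ᶠ x : Mℤ, Multiplicative.toAdd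
      ((f : Mℤ → Mℤ) (x * Multiplicative.ofAdd i)))
    = Multiplicative.ofAdd (∑ᶠ x : Mℤ, Multiplicative.toAdd ((f : Mℤ → Mℤ) x))
  rw [key]

/-- The delta function at the origin. -/
noncomputable def delta : WreathBase Mℤ Mℤ := toBase Mℤ Mℤ (Multiplicative.ofAdd 1)

lemma delta_apply (x : Mℤ) :
    (delta : Mℤ → Mℤ) x = if x = (1 : Mℤ) then Multiplicative.ofAdd (1 : ℤ) else 1 := by
  by_cases hx : x = (1 : Mℤ)
  · simp [delta, toBase, hx]
  · simp [delta, toBase, hx]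

lemma sigma_delta : sigma delta = Multiplicative.ofAdd (1 : ℤ) := by
  have h0 : ∀ x : Mℤ, x ≠ 1 → Multiplicative.toAdd ((delta : Mℤ → Mℤ) x) = 0 := by
    intro x hx
    rw [delta_apply, if_neg hx, toAdd_one]
  have key : (∑ᶠ x : Mℤ, Multiplicative.toAdd ((delta : Mℤ → Mℤ) x)) = 1 := by
    rw [finsum_eq_single _ (1 : Mℤ) h0, delta_apply, if_pos rfl, toAdd_ofAdd]
  show Multiplicative.ofAdd (∑ᶠ x : Mℤ, Multiplicative.toAdd ((delta : Mℤ → Mℤ) x))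
      = Multiplicative.ofAdd (1 : ℤ)
  rw [key]

/-- The difference operator `f ↦ f * (shift 1 f)⁻¹`, i.e. `1 - t`. -/
def dOp : WreathBase Mℤ Mℤ →* WreathBase Mℤ Mℤ where
  toFun f := f * (shift 1 f)⁻¹
  map_one' := by simp
  map_mul' f g := by
    show (f * g) * (shift 1 (f * g))⁻¹ = (f * (shift 1 f)⁻¹) * (g * (shift 1 g)⁻¹)
    rw [map_mul, mul_inv]
    exact mul_mul_mul_comm f g (shift 1 f)⁻¹ (shift 1 g)⁻¹

/-- Iterates of the difference operator. -/
def dIter : ℕ → (WreathBase Mℤ Mℤ →* WreathBase Mℤ Mℤ)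
  | 0 => MonoidHom.id _
  | k + 1 => dOp.comp (dIter k)

lemma dIter_succ_apply (k : ℕ) (f : WreathBase Mℤ Mℤ) :
    dIter (k + 1) f = dOp (dIter k f) := rfl

lemma shift_dOp (i : ℤ) (f : WreathBase Mℤ Mℤ) : shift i (dOp f) = dOp (shift i f) := by
  show shift i (f * (shift 1 f)⁻¹) = shift i f * (shift 1 (shift i f))⁻¹
  rw [map_mul, map_inv, shift_shift, shift_shift, add_comm]

lemma shift_dIter (i : ℤ) (k : ℕ) (f : WreathBase Mℤ Mℤ) :
    shift i (dIter k f) = dIter k (shift i f) := by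
  induction k with
  | zero => rfl
  | succ k ih => rw [dIter_succ_apply, shift_dOp, ih, dIter_succ_apply]

lemma dOp_injective : Function.Injective dOp := by
  intro f g hfg
  have hfg' : ∀ x : Mℤ,
      (f : Mℤ → Mℤ) x * ((f : Mℤ → Mℤ) (x * Multiplicative.ofAdd (1:ℤ)))⁻¹
        = (g : Mℤ → Mℤ) x * ((g : Mℤ → Mℤ) (x * Multiplicative.ofAdd (1:ℤ)))⁻¹ := by
    intro x
    have := congrArg (fun u : WreathBase Mℤ Mℤ => (u : Mℤ → Mℤ) x) hfg
    exact this
  set φ : Mℤ → ℤ := fun x =>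
    Multiplicative.toAdd ((f : Mℤ → Mℤ) x) - Multiplicative.toAdd ((g : Mℤ → Mℤ) x) with hφ
  have hstep : ∀ x : Mℤ, φ (x * Multiplicative.ofAdd (1:ℤ)) = φ x := by
    intro x
    have h := congrArg Multiplicative.toAdd (hfg' x)
    simp only [toAdd_mul, toAdd_inv] at h
    simp only [hφ]
    omega
  have hiter : ∀ (k : ℕ) (x : Mℤ), φ (x * Multiplicative.ofAdd (k : ℤ)) = φ x := by
    intro k
    induction k with
    | zero => intro x; simp
    | succ k ih =>
      intro x
      have : x * Multiplicative.ofAdd ((k + 1 : ℕ) : ℤ)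
          = (x * Multiplicative.ofAdd (k : ℤ)) * Multiplicative.ofAdd (1 : ℤ) := by
        rw [mul_assoc, ← ofAdd_add]
        norm_num
      rw [this, hstep, ih]
  have hzero : ∀ x : Mℤ, φ x = 0 := by
    by_contra hc
    push_neg at hc
    obtain ⟨x0, hx0⟩ := hc
    have hsupfin : (Function.support φ).Finite := by
      apply Set.Finite.subset (f.2.union g.2)
      intro x hx
      simp only [Function.mem_support, hφ] at hx
      by_contra hmem
      simp only [Set.mem_union, Function.mem_mulSupport, not_or, not_not] at hmem
      rw [hmem.1, hmem.2] at hx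
      simp at hx
    have hinj : Function.Injective (fun k : ℕ => x0 * Multiplicative.ofAdd (k : ℤ)) := by
      intro a b hab
      simp only [mul_right_inj] at hab
      have := congrArg Multiplicative.toAdd hab
      simpa using this
    have hmem : ∀ k : ℕ, (fun k : ℕ => x0 * Multiplicative.ofAdd (k : ℤ)) k
        ∈ Function.support φ := by
      intro k
      simp only [Function.mem_support]
      rw [hiter k x0]
      exact hx0
    exact (Set.infinite_of_injective_forall_mem hinj hmem) hsupfin
  apply Subtype.ext
  funext x
  have := hzero x
  simp only [hφ] at this
  have h2 : Multiplicative.toAdd ((f : Mℤ → Mℤ) x) = Multiplicative.toAdd ((g : Mℤ → Mℤ) x) := by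
    omega
  exact Multiplicative.toAdd.injective h2

lemma dIter_injective (k : ℕ) : Function.Injective (dIter k) := by
  induction k with
  | zero => exact fun a b h => h
  | succ k ih =>
    intro a b hab
    rw [dIter_succ_apply, dIter_succ_apply] at hab
    exact ih (dOp_injective hab)

/-- The "sum over `i < l` of shifts by `i`" operator. -/
noncomputable def slFun (l : ℕ) (f : WreathBase Mℤ Mℤ) : WreathBase Mℤ Mℤ :=
  ∏ i ∈ Finset.range l, shift (i : ℤ) f

/-- `1 - t^l`. -/
def dlFun (l : ℕ) (f : WreathBase Mℤ Mℤ) : WreathBase Mℤ Mℤ := f * (shift (l : ℤ) f)⁻¹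

lemma slFun_zero (f : WreathBase Mℤ Mℤ) : slFun 0 f = 1 := Finset.prod_range_zero _

lemma slFun_succ (l : ℕ) (f : WreathBase Mℤ Mℤ) :
    slFun (l + 1) f = slFun l f * shift (l : ℤ) f := Finset.prod_range_succ _ _

lemma dOp_slFun (l : ℕ) (f : WreathBase Mℤ Mℤ) : dOp (slFun l f) = dlFun l f := by
  induction l with
  | zero =>
    rw [slFun_zero, map_one, dlFun]
    push_cast
    rw [shift_zero, mul_inv_cancel]
  | succ l ih =>
    rw [slFun_succ, map_mul, ih, dlFun, dlFun]
    show f * (shift (l:ℤ) f)⁻¹ * dOp (shift (l:ℤ) f) = f * (shift ((l+1 : ℕ):ℤ) f)⁻¹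
    have hd : dOp (shift (l:ℤ) f) = shift (l:ℤ) f * (shift (((l+1:ℕ)):ℤ) f)⁻¹ := by
      show shift (l:ℤ) f * (shift 1 (shift (l:ℤ) f))⁻¹ = _
      rw [shift_shift]
      norm_num
      rw [add_comm]
    rw [hd]
    group

lemma slFun_mul (l : ℕ) (f g : WreathBase Mℤ Mℤ) :
    slFun l (f * g) = slFun l f * slFun l g := by
  rw [slFun, slFun, slFun, ← Finset.prod_mul_distrib]
  exact Finset.prod_congr rfl fun i _ => map_mul _ _ _

lemma slFun_inv (l : ℕ) (f : WreathBase Mℤ Mℤ) : slFun l f⁻¹ = (slFun l f)⁻¹ := by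
  rw [slFun, slFun, ← Finset.prod_inv_distrib]
  exact Finset.prod_congr rfl fun i _ => map_inv _ _

lemma shift_slFun (i : ℤ) (l : ℕ) (f : WreathBase Mℤ Mℤ) :
    shift i (slFun l f) = slFun l (shift i f) := by
  rw [slFun, map_prod, slFun]
  exact Finset.prod_congr rfl fun j _ => by rw [shift_shift, shift_shift, add_comm]

lemma slFun_dOp (l : ℕ) (f : WreathBase Mℤ Mℤ) : slFun l (dOp f) = dOp (slFun l f) := by
  show slFun l (f * (shift 1 f)⁻¹) = slFun l f * (shift 1 (slFun l f))⁻¹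
  rw [slFun_mul, slFun_inv, shift_slFun]

lemma slFun_dIter (l k : ℕ) (f : WreathBase Mℤ Mℤ) :
    slFun l (dIter k f) = dIter k (slFun l f) := by
  induction k with
  | zero => rfl
  | succ k ih => rw [dIter_succ_apply, slFun_dOp, ih, dIter_succ_apply]

/-- Iterates of `dlFun`. -/
def dlIter (l : ℕ) : ℕ → WreathBase Mℤ Mℤ → WreathBase Mℤ Mℤ
  | 0 => id
  | k + 1 => fun f => dlFun l (dlIter l k f)

lemma dlIter_eq (l k : ℕ) (f : WreathBase Mℤ Mℤ) :
    dlIter l k f = dIter k ((slFun l)^[k] f) := by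
  induction k with
  | zero => rfl
  | succ k ih =>
    show dlFun l (dlIter l k f) = dIter (k+1) ((slFun l)^[k+1] f)
    rw [ih, ← dOp_slFun, slFun_dIter, dIter_succ_apply, Function.iterate_succ_apply']

lemma sigma_slFun (l : ℕ) (f : WreathBase Mℤ Mℤ) :
    sigma (slFun l f) = (sigma f) ^ l := by
  rw [slFun, map_prod]
  have hcg : ∀ i ∈ Finset.range l, sigma (shift (i : ℤ) f) = sigma f :=
    fun i _ => sigma_shift (i : ℤ) f
  rw [Finset.prod_congr rfl hcg, Finset.prod_const, Finset.card_range]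

lemma sigma_slFun_iter (l k : ℕ) (f : WreathBase Mℤ Mℤ) :
    sigma ((slFun l)^[k] f) = (sigma f) ^ (l ^ k) := by
  induction k with
  | zero => simp
  | succ k ih =>
    rw [Function.iterate_succ_apply', sigma_slFun, ih, ← pow_mul, pow_succ]

end ZW

namespace ZW

lemma act_dIter (g : Mℤ) (k : ℕ) (f : WreathBase Mℤ Mℤ) :
    wreathAction Mℤ Mℤ g (dIter k f) = dIter k (wreathAction Mℤ Mℤ g f) := by
  rw [act_eq_shift, act_eq_shift, shift_dIter]

/-- The subgroup of `ℤ wr ℤ` of elements whose base part is divisible by `(1-t)^m`. -/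
def KSub (m : ℕ) : Subgroup ZwrZ where
  carrier := {x | x.left ∈ (dIter m).range}
  one_mem' := by
    show (1 : ZwrZ).left ∈ (dIter m).range
    rw [SemidirectProduct.one_left]
    exact Subgroup.one_mem _
  mul_mem' := by
    rintro a b ⟨wa, hwa⟩ ⟨wb, hwb⟩
    show (a * b).left ∈ (dIter m).range
    rw [SemidirectProduct.mul_left]
    refine ⟨wa * wreathAction Mℤ Mℤ a.right wb, ?_⟩
    rw [map_mul, hwa, ← act_dIter, hwb]
  inv_mem' := by
    rintro a ⟨wa, hwa⟩
    show a⁻¹.left ∈ (dIter m).range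
    rw [SemidirectProduct.inv_left]
    refine ⟨(wreathAction Mℤ Mℤ a.right)⁻¹ wa⁻¹, ?_⟩
    rw [← map_inv (wreathAction Mℤ Mℤ) a.right, ← act_dIter, map_inv (dIter m) wa, hwa]

lemma invFun_dIter {m : ℕ} {y : WreathBase Mℤ Mℤ} (hy : y ∈ (dIter m).range) :
    dIter m (Function.invFun (dIter m) y) = y := by
  obtain ⟨w, hw⟩ := hy
  exact Function.invFun_eq ⟨w, hw⟩

lemma invFun_dIter_eq {m : ℕ} {w y : WreathBase Mℤ Mℤ} (h : dIter m w = y) :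
    Function.invFun (dIter m) y = w :=
  dIter_injective m (by rw [invFun_dIter ⟨w, h⟩, h])

/-- The homomorphism `K → ℤ` given by the total sum of `left/(1-t)^m`. -/
noncomputable def phi (m : ℕ) : KSub m →* Multiplicative ℤ where
  toFun x := sigma (Function.invFun (dIter m) (x : ZwrZ).left)
  map_one' := by
    have h1 : Function.invFun (dIter m) ((1 : ZwrZ)).left = 1 := by
      rw [SemidirectProduct.one_left]
      exact invFun_dIter_eq (map_one _)
    show sigma (Function.invFun (dIter m) ((1 : ZwrZ)).left) = 1
    rw [h1, map_one]
  map_mul' a b := by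
    set ga := Function.invFun (dIter m) (a : ZwrZ).left with hga
    set gb := Function.invFun (dIter m) (b : ZwrZ).left with hgb
    have ha : dIter m ga = (a : ZwrZ).left := invFun_dIter a.2
    have hb : dIter m gb = (b : ZwrZ).left := invFun_dIter b.2
    have hab : dIter m (ga * wreathAction Mℤ Mℤ (a : ZwrZ).right gb)
        = ((a * b : KSub m) : ZwrZ).left := by
      rw [map_mul, ha, ← act_dIter, hb]
      rfl
    show sigma (Function.invFun (dIter m) ((a * b : KSub m) : ZwrZ).left)
        = sigma ga * sigma gb
    rw [invFun_dIter_eq hab, map_mul, act_eq_shift, sigma_shift]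

lemma phi_eval {m : ℕ} (x : KSub m) (w : WreathBase Mℤ Mℤ)
    (h : (x : ZwrZ).left = dIter m w) : phi m x = sigma w := by
  show sigma (Function.invFun (dIter m) (x : ZwrZ).left) = sigma w
  rw [h, invFun_dIter_eq rfl]

lemma commutator_inl_inr (f : WreathBase Mℤ Mℤ) (g : Mℤ) :
    ⁅SemidirectProduct.inl (φ := wreathAction Mℤ Mℤ) f, SemidirectProduct.inr (φ := wreathAction Mℤ Mℤ) g⁆
      = SemidirectProduct.inl (f * (wreathAction Mℤ Mℤ g f)⁻¹) := by
  refine SemidirectProduct.ext ?_ ?_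
  · simp [commutatorElement_def, SemidirectProduct.mul_left]
  · simp [commutatorElement_def]

end ZW

namespace FMB

open ZW MB

/-- `ℤ wr ℤ` is metabelian. -/
lemma derivedSeries_ZwrZ_two : derivedSeries ZwrZ 2 = ⊥ := by
  have h1 : derivedSeries ZwrZ 1 ≤ (SemidirectProduct.rightHom :
      ZwrZ →* Mℤ).ker := by
    rw [derivedSeries_one, commutator_def, Subgroup.commutator_le]
    intro g1 _ g2 _
    rw [MonoidHom.mem_ker, map_commutatorElement]
    exact commutatorElement_eq_one_iff_commute.mpr (mul_comm _ _)
  have hker : ∀ x y : ZwrZ, x ∈ (SemidirectProduct.rightHom : ZwrZ →* Mℤ).ker →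
      y ∈ (SemidirectProduct.rightHom : ZwrZ →* Mℤ).ker → x * y = y * x := by
    intro x y hx hy
    rw [MonoidHom.mem_ker, SemidirectProduct.rightHom_eq_right] at hx hy
    refine SemidirectProduct.ext ?_ ?_
    · rw [SemidirectProduct.mul_left, SemidirectProduct.mul_left, hx, hy, map_one,
        MulAut.one_apply, MulAut.one_apply, mul_comm]
    · rw [SemidirectProduct.mul_right, SemidirectProduct.mul_right, hx, hy]
  have h2 : derivedSeries ZwrZ 2 ≤ ⊥ := by
    show derivedSeries ZwrZ (1 + 1) ≤ ⊥
    rw [derivedSeries_succ]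
    calc ⁅derivedSeries ZwrZ 1, derivedSeries ZwrZ 1⁆
        ≤ ⁅(SemidirectProduct.rightHom : ZwrZ →* Mℤ).ker,
            (SemidirectProduct.rightHom : ZwrZ →* Mℤ).ker⁆ :=
          Subgroup.commutator_mono h1 h1
      _ ≤ ⊥ := by
          rw [Subgroup.commutator_le]
          intro g1 hg1 g2 hg2
          rw [Subgroup.mem_bot, commutatorElement_eq_one_iff_commute]
          exact hker g1 g2 hg1 hg2
  exact le_bot_iff.mp h2

variable {n : ℕ}

/-- The free metabelian group is metabelian. -/
lemma derivedSeries_FM_two : derivedSeries (FreeMetabelian n) 2 = ⊥ := by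
  have hs : Function.Surjective
      (QuotientGroup.mk' (derivedSeries (FreeGroup (Fin n)) 2)) :=
    QuotientGroup.mk'_surjective _
  have := (map_derivedSeries_eq hs 2).symm
  rw [this, Subgroup.map_eq_bot_iff, QuotientGroup.ker_mk']

lemma FM_comm (x y : FreeMetabelian n)
    (hx : x ∈ derivedSeries (FreeMetabelian n) 1)
    (hy : y ∈ derivedSeries (FreeMetabelian n) 1) : x * y = y * x := by
  have : ⁅x, y⁆ ∈ derivedSeries (FreeMetabelian n) 2 :=
    (derivedSeries_succ (FreeMetabelian n) 1).ge
      (Subgroup.commutator_mem_commutator hx hy)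
  rw [derivedSeries_FM_two, Subgroup.mem_bot, commutatorElement_eq_one_iff_commute] at this
  exact this

/-- The generators of the free metabelian group. -/
def qgen (i : Fin n) : FreeMetabelian n :=
  ((FreeGroup.of i : FreeGroup (Fin n)) : FreeMetabelian n)

/-- The projection `FreeMetabelian n → ℤ wr ℤ` sending `qgen i0 ↦ a`, `qgen i1 ↦ b`. -/
noncomputable def pihom (i0 i1 : Fin n) : FreeMetabelian n →* ZwrZ := by
  refine QuotientGroup.lift _
    (FreeGroup.lift (fun i => if i = i0 then aZ else if i = i1 then bZ else 1)) ?_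
  intro x hx
  have hle := map_derivedSeries_le_derivedSeries
    (FreeGroup.lift (fun i : Fin n => if i = i0 then aZ else if i = i1 then bZ else 1)) 2
  have : (FreeGroup.lift (fun i : Fin n => if i = i0 then aZ else if i = i1 then bZ else 1)) x
      ∈ derivedSeries ZwrZ 2 :=
    hle (Subgroup.mem_map_of_mem _ hx)
  rw [derivedSeries_ZwrZ_two, Subgroup.mem_bot] at this
  exact this

lemma pihom_qgen0 (i0 i1 : Fin n) : pihom i0 i1 (qgen i0) = aZ := by
  show QuotientGroup.lift _ _ _ ((FreeGroup.of i0 : FreeGroup (Fin n)) : FreeMetabelian n) = aZ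
  exact FreeGroup.lift_apply_of.trans (if_pos rfl)

lemma pihom_qgen1 (i0 i1 : Fin n) (h : i0 ≠ i1) : pihom i0 i1 (qgen i1) = bZ := by
  show QuotientGroup.lift _ _ _ ((FreeGroup.of i1 : FreeGroup (Fin n)) : FreeMetabelian n) = bZ
  exact FreeGroup.lift_apply_of.trans ((if_neg (Ne.symm h)).trans (if_pos rfl))

lemma aZ_eq : aZ = SemidirectProduct.inl (φ := wreathAction Mℤ Mℤ) delta := rfl

lemma bZ_pow (l : ℕ) :
    bZ ^ l = SemidirectProduct.inr (φ := wreathAction Mℤ Mℤ)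
      (Multiplicative.ofAdd (l : ℤ)) := by
  have : bZ = SemidirectProduct.inr (φ := wreathAction Mℤ Mℤ)
      (Multiplicative.ofAdd (1 : ℤ)) := rfl
  rw [this, ← map_pow]
  congr 1
  rw [← ofAdd_nsmul]
  congr 1
  simp

lemma pihom_wseq (i0 i1 : Fin n) (h : i0 ≠ i1) (l : ℕ) (k : ℕ) :
    pihom i0 i1 (MB.wseq (qgen i0) (qgen i1) l k)
      = SemidirectProduct.inl (φ := wreathAction Mℤ Mℤ) (dlIter l k delta) := by
  induction k with
  | zero =>
    show pihom i0 i1 (qgen i0) = _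
    rw [pihom_qgen0, aZ_eq]
    rfl
  | succ k ih =>
    show pihom i0 i1 ⁅MB.wseq (qgen i0) (qgen i1) l k, (qgen i1) ^ l⁆ = _
    rw [map_commutatorElement, map_pow, pihom_qgen1 i0 i1 h, ih, bZ_pow,
      commutator_inl_inr]
    rfl

end FMB

/-- For every `m ≥ 1` there is a 2-generated subgroup `H` of the free
metabelian group of rank `n ≥ 2` with distortion `⪰ l^m`. -/
theorem statement3 (n : ℕ) (hn : 2 ≤ n) (m : ℕ) (hm : 1 ≤ m) :
    ∃ (H : Subgroup (FreeMetabelian n)) (x y : FreeMetabelian n),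
      H = Subgroup.closure {x, y} ∧
      ∀ (T : Set (FreeMetabelian n)) (S : Set H),
        T.Finite → Subgroup.closure T = ⊤ → S.Finite → Subgroup.closure S = ⊤ →
        Dominates (fun l => l ^ m) (distortion T H S) := by
  classical
  have h0 : (0 : ℕ) < n := by omega
  have h1 : (1 : ℕ) < n := by omega
  set i0 : Fin n := ⟨0, h0⟩ with hi0
  set i1 : Fin n := ⟨1, h1⟩ with hi1
  have hne : i0 ≠ i1 := by
    intro hc
    have := congrArg Fin.val hc
    simp [hi0, hi1] at this
  set qa : FreeMetabelian n := FMB.qgen i0 with hqa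
  set qb : FreeMetabelian n := FMB.qgen i1 with hqb
  set u : FreeMetabelian n := MB.wseq qa qb 1 m with hu
  refine ⟨Subgroup.closure {u, qb}, u, qb, rfl, ?_⟩
  set H : Subgroup (FreeMetabelian n) := Subgroup.closure {u, qb} with hHdef
  intro T S hTf hTtop hSf hStop
  have Hcomm : ∀ x y : FreeMetabelian n, x ∈ derivedSeries (FreeMetabelian n) 1 →
      y ∈ derivedSeries (FreeMetabelian n) 1 → x * y = y * x := FMB.FM_comm
  -- membership of the witnesses in H
  have hmemH : ∀ l : ℕ, MB.wseq qa qb l m ∈ H := by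
    intro l
    exact MB.Mspan_le_closure qb u
      (hu ▸ MB.wseq_mem_Mspan Hcomm qa qb l m hm)
  -- the homomorphism ψ : H → ℤ
  have hKmem : ∀ h : FreeMetabelian n, h ∈ H → FMB.pihom i0 i1 h ∈ ZW.KSub m := by
    intro h hh
    refine Subgroup.closure_induction ?_ ?_ ?_ ?_ hh
    · intro x hx
      rcases Set.mem_insert_iff.mp hx with rfl | hx'
      · -- x = u
        show ((FMB.pihom i0 i1 u) : ZwrZ).left ∈ (ZW.dIter m).range
        rw [hu, FMB.pihom_wseq i0 i1 hne, SemidirectProduct.left_inl, ZW.dlIter_eq]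
        exact ⟨_, rfl⟩
      · have hx'' : x = qb := hx'
        subst hx''
        show ((FMB.pihom i0 i1 qb) : ZwrZ).left ∈ (ZW.dIter m).range
        rw [hqb, FMB.pihom_qgen1 i0 i1 hne]
        refine ⟨1, ?_⟩
        rw [map_one]
        rfl
    · rw [map_one]; exact Subgroup.one_mem _
    · intro x y _ _ hx hy
      rw [map_mul]; exact Subgroup.mul_mem _ hx hy
    · intro x _ hx
      rw [map_inv]; exact Subgroup.inv_mem _ hx
  set ψ : H →* Multiplicative ℤ :=
    (ZW.phi m).comp
      (((FMB.pihom i0 i1).comp H.subtype).codRestrict (ZW.KSub m)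
        (fun x => hKmem x x.2)) with hψ
  -- value of ψ on the witnesses
  have hval : ∀ l : ℕ,
      ψ ⟨MB.wseq qa qb l m, hmemH l⟩ = Multiplicative.ofAdd ((l : ℤ) ^ m) := by
    intro l
    have hleft : ((FMB.pihom i0 i1 (MB.wseq qa qb l m)) : ZwrZ).left
        = ZW.dIter m ((ZW.slFun l)^[m] ZW.delta) := by
      rw [hqa, hqb, FMB.pihom_wseq i0 i1 hne, SemidirectProduct.left_inl, ZW.dlIter_eq]
    show ZW.phi m _ = _
    rw [ZW.phi_eval _ _ hleft, ZW.sigma_slFun_iter, ZW.sigma_delta, ← ofAdd_nsmul]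
    congr 1
    simp [nsmul_eq_mul]
  -- bound on generators of S
  obtain ⟨E, hE⟩ : ∃ E : ℕ, ∀ s ∈ S, (Multiplicative.toAdd (ψ s)).natAbs ≤ E := by
    have hbdd := (hSf.image (fun s => (Multiplicative.toAdd (ψ s)).natAbs)).bddAbove
    obtain ⟨E, hEmem⟩ := hbdd
    exact ⟨E, fun s hs => hEmem (Set.mem_image_of_mem _ hs)⟩
  -- commutator length bound
  have hcomm_le : ∀ x y : FreeMetabelian n,
      wordLength T ⁅x, y⁆ ≤ 2 * wordLength T x + 2 * wordLength T y := by
    intro x y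
    rw [commutatorElement_def]
    have s1 := WL.wordLength_mul_le hTtop (x * y * x⁻¹) y⁻¹
    have s2 := WL.wordLength_mul_le hTtop (x * y) x⁻¹
    have s3 := WL.wordLength_mul_le hTtop x y
    have s4 := WL.wordLength_inv_le hTtop x
    have s5 := WL.wordLength_inv_le hTtop y
    omega
  -- word length bound for the witnesses
  set Ka : ℕ := wordLength T qa with hKa
  set Kb : ℕ := wordLength T qb with hKb
  have hwl : ∀ l k : ℕ, 1 ≤ l →
      wordLength T (MB.wseq qa qb l k) ≤ 4 ^ k * ((Ka + Kb + 1) * l) := by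
    intro l k hl
    induction k with
    | zero =>
      show wordLength T qa ≤ 4 ^ 0 * ((Ka + Kb + 1) * l)
      have : Ka + Kb + 1 ≤ (Ka + Kb + 1) * l := Nat.le_mul_of_pos_right _ (by omega)
      omega
    | succ k ih =>
      show wordLength T ⁅MB.wseq qa qb l k, qb ^ l⁆ ≤ _
      have hc := hcomm_le (MB.wseq qa qb l k) (qb ^ l)
      have hp : wordLength T (qb ^ l) ≤ l * Kb := WL.wordLength_pow_le hTtop qb l
      have hpa : l * Kb ≤ (Ka + Kb + 1) * l := by
        calc l * Kb ≤ l * (Ka + Kb + 1) := Nat.mul_le_mul_left _ (by omega)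
        _ = (Ka + Kb + 1) * l := Nat.mul_comm _ _
      have hple : (Ka + Kb + 1) * l ≤ 4 ^ k * ((Ka + Kb + 1) * l) :=
        Nat.le_mul_of_pos_left _ (pow_pos (by omega) k)
      have h4 : (4:ℕ) ^ (k+1) = 4 * 4 ^ k := by rw [pow_succ]; ring
      set A := 4 ^ k * ((Ka + Kb + 1) * l) with hA
      have hgoal : 2 * wordLength T (MB.wseq qa qb l k) + 2 * wordLength T (qb ^ l)
          ≤ 4 * A := by omega
      have hEq : 4 ^ (k+1) * ((Ka + Kb + 1) * l) = 4 * A := by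
        rw [hA, h4, mul_assoc]
      omega
  -- assemble
  set C1 : ℕ := 4 ^ m * (Ka + Kb + 1) with hC1
  have hwlT : ∀ l : ℕ, 1 ≤ l → wordLength T (MB.wseq qa qb l m) ≤ C1 * l := by
    intro l hl
    have := hwl l m hl
    rw [hC1, mul_assoc]
    exact this
  refine ⟨C1 + E + 1, by omega, ?_⟩
  intro l
  rcases Nat.eq_zero_or_pos l with rfl | hl
  · show (0:ℕ) ^ m ≤ _
    rw [zero_pow (show m ≠ 0 by omega)]
    exact Nat.zero_le _
  -- l ≥ 1
  set C : ℕ := C1 + E + 1 with hC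
  have key1 : l ^ m = (Multiplicative.toAdd (ψ ⟨MB.wseq qa qb l m, hmemH l⟩)).natAbs := by
    rw [hval l, toAdd_ofAdd]
    rw [← Nat.cast_pow, Int.natAbs_natCast]
  have key2 : (Multiplicative.toAdd (ψ ⟨MB.wseq qa qb l m, hmemH l⟩)).natAbs
      ≤ wordLength S (⟨MB.wseq qa qb l m, hmemH l⟩ : H) * E :=
    WL.natAbs_le_wordLength hStop ψ hE _
  have key3 : wordLength S (⟨MB.wseq qa qb l m, hmemH l⟩ : H)
      ≤ distortion T H S (C1 * l) :=
    WL.le_distortion hTtop hTf _ (hwlT l hl)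
  have key4 : distortion T H S (C1 * l) ≤ distortion T H S (C * l) :=
    WL.distortion_mono hTtop hTf (Nat.mul_le_mul_right l (by omega))
  calc l ^ m ≤ wordLength S (⟨MB.wseq qa qb l m, hmemH l⟩ : H) * E := by
        rw [key1]; exact key2
    _ ≤ distortion T H S (C * l) * E := Nat.mul_le_mul_right E (le_trans key3 key4)
    _ ≤ distortion T H S (C * l) * C := Nat.mul_le_mul_left _ (by omega)
    _ = C * distortion T H S (C * l) := Nat.mul_comm _ _
end DistortionPaper
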